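/- arXiv:2105.13301 — 4 statements merged into one kernel-verified Lean document; each statement's English description precedes it below -/
import Mathlib

section
/- The convolution of two log-concave sequences supported on the integers is log-concave: if (a_k) and (b_k) are nonnegative log-concave sequences on ℤ with contiguous support, then c_k = Σ_j a_j b_{k−j} satisfies c_k² ≥ c_{k−1} c_{k+1} for all k. -/
/-- TP2 property of a log-concave nonnegative sequence with contiguous support. -/
lemma tp2_aux (a : ℤ → ℝ) (ha0 : ∀ k, 0 ≤ a k)
    (halc : ∀ k, a (k - 1) * a (k + 1) ≤ (a k) ^ 2)
    (hacont : ∀ j k l : ℤ, j ≤ k → k ≤ l → 0 < a j → 0 < a l → 0 < a k)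
    {s t : ℤ} (hst : s ≤ t) : a s * a (t + 1) ≤ a (s + 1) * a t := by
  have main : ∀ n : ℕ, ∀ s t : ℤ, s ≤ t → (t - s).toNat = n →
      a s * a (t + 1) ≤ a (s + 1) * a t := by
    intro n
    induction n with
    | zero =>
      intro s t hst hn
      have : t = s := by omega
      subst this
      rw [mul_comm]
    | succ n IH =>
      intro s t hst hn
      have hst' : s ≤ t - 1 := by omega
      have Q : a s * a (t - 1 + 1) ≤ a (s + 1) * a (t - 1) :=
        IH s (t - 1) hst' (by omega)
      rw [show t - 1 + 1 = t by ring] at Q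
      rcases eq_or_lt_of_le (ha0 s) with hs | hs
      · rw [← hs, zero_mul]; exact mul_nonneg (ha0 _) (ha0 _)
      rcases eq_or_lt_of_le (ha0 (t + 1)) with h2 | h2
      · rw [← h2, mul_zero]; exact mul_nonneg (ha0 _) (ha0 _)
      have ht1pos : 0 < a (t - 1) :=
        hacont s (t - 1) (t + 1) hst' (by omega) hs h2
      have htpos : 0 < a t := hacont s t (t + 1) hst (by omega) hs h2
      have h1 : a (t - 1) * a (t + 1) ≤ (a t) ^ 2 := halc t
      nlinarith [mul_le_mul_of_nonneg_left h1 (ha0 s),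
        mul_le_mul_of_nonneg_right Q htpos.le, ht1pos, ha0 s]
  exact main (t - s).toNat s t hst rfl

set_option maxHeartbeats 1000000 in
/-- The convolution of two log-concave sequences supported on the integers is log-concave:
if (a_k) and (b_k) are nonnegative log-concave sequences on ℤ with contiguous support,
then c_k = Σ_j a_j b_{k−j} satisfies c_k² ≥ c_{k−1} c_{k+1} for all k. -/
theorem convolution_log_concave (a b : ℤ → ℝ)
    (ha0 : ∀ k, 0 ≤ a k) (hb0 : ∀ k, 0 ≤ b k)
    (haS : Summable a) (hbS : Summable b)
    (halc : ∀ k, a (k - 1) * a (k + 1) ≤ (a k) ^ 2)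
    (hblc : ∀ k, b (k - 1) * b (k + 1) ≤ (b k) ^ 2)
    (hacont : ∀ j k l : ℤ, j ≤ k → k ≤ l → 0 < a j → 0 < a l → 0 < a k)
    (hbcont : ∀ j k l : ℤ, j ≤ k → k ≤ l → 0 < b j → 0 < b l → 0 < b k)
    (k : ℤ) :
    (∑' j : ℤ, a j * b (k - 1 - j)) * (∑' j : ℤ, a j * b (k + 1 - j))
      ≤ (∑' j : ℤ, a j * b (k - j)) ^ 2 := by
  have ha2 : ∀ {s t : ℤ}, s ≤ t → a s * a (t + 1) ≤ a (s + 1) * a t :=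
    fun {s t} h => tp2_aux a ha0 halc hacont h
  have hb2 : ∀ {s t : ℤ}, s ≤ t → b s * b (t + 1) ≤ b (s + 1) * b t :=
    fun {s t} h => tp2_aux b hb0 hblc hbcont h
  -- summability of convolution-type sequences
  have hBle : ∀ x : ℤ, b x ≤ ∑' y, b y := fun x => Summable.le_tsum hbS x (fun j _ => hb0 j)
  have hA : ∀ m : ℤ, Summable (fun j : ℤ => a j * b (m - j)) := by
    intro m
    refine (haS.mul_right (∑' y, b y)).of_nonneg_of_le
      (fun j => mul_nonneg (ha0 j) (hb0 _)) (fun j => ?_)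
    exact mul_le_mul_of_nonneg_left (hBle _) (ha0 j)
  have hAnn : ∀ (m : ℤ) (j : ℤ), 0 ≤ a j * b (m - j) :=
    fun m j => mul_nonneg (ha0 j) (hb0 _)
  -- double-indexed functions
  set g1 : ℤ × ℤ → ℝ := fun p =>
    a (p.1 - 1) * b (k - 1 - (p.1 - 1)) * (a (p.2 + 1) * b (k + 1 - (p.2 + 1))) with hg1
  set g2 : ℤ × ℤ → ℝ := fun p =>
    a p.1 * b (k - p.1) * (a p.2 * b (k - p.2)) with hg2
  -- shifting equivalence and swap involution
  set e : ℤ × ℤ ≃ ℤ × ℤ :=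
    { toFun := fun p => (p.1 - 1, p.2 + 1)
      invFun := fun p => (p.1 + 1, p.2 - 1)
      left_inv := fun p => by obtain ⟨x, y⟩ := p; simp
      right_inv := fun p => by obtain ⟨x, y⟩ := p; simp } with he
  set ψ : ℤ × ℤ ≃ ℤ × ℤ :=
    { toFun := fun p => (p.2 + 1, p.1 - 1)
      invFun := fun p => (p.2 + 1, p.1 - 1)
      left_inv := fun p => by obtain ⟨x, y⟩ := p; simp
      right_inv := fun p => by obtain ⟨x, y⟩ := p; simp } with hψ
  -- summability on ℤ × ℤ
  have hS12 : Summable (fun z : ℤ × ℤ =>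
      (a z.1 * b (k - 1 - z.1)) * (a z.2 * b (k + 1 - z.2))) :=
    (hA (k - 1)).mul_of_nonneg (hA (k + 1)) (fun j => hAnn _ j) (fun j => hAnn _ j)
  have hSg2 : Summable g2 := by
    have := (hA k).mul_of_nonneg (hA k) (fun j => hAnn _ j) (fun j => hAnn _ j)
    exact this.congr (fun p => rfl)
  have hSg1 : Summable g1 := by
    have h := hS12.comp_injective e.injective
    exact h.congr (fun p => rfl)
  have hSg1ψ : Summable (fun p => g1 (ψ p)) := hSg1.comp_injective ψ.injective
  have hSg2ψ : Summable (fun p => g2 (ψ p)) := hSg2.comp_injective ψ.injective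
  -- expressing both sides as double sums
  have lhs_eq : (∑' j : ℤ, a j * b (k - 1 - j)) * (∑' j : ℤ, a j * b (k + 1 - j))
      = ∑' p : ℤ × ℤ, g1 p := by
    rw [Summable.tsum_mul_tsum (hA (k - 1)) (hA (k + 1)) hS12]
    exact (e.tsum_eq
      (fun z : ℤ × ℤ => (a z.1 * b (k - 1 - z.1)) * (a z.2 * b (k + 1 - z.2)))).symm
  have rhs_eq : (∑' j : ℤ, a j * b (k - j)) ^ 2 = ∑' p : ℤ × ℤ, g2 p := by
    rw [sq, Summable.tsum_mul_tsum (hA k) (hA k)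
      ((hA k).mul_of_nonneg (hA k) (fun j => hAnn _ j) (fun j => hAnn _ j))]
  rw [lhs_eq, rhs_eq]
  -- key pointwise inequality
  have key : ∀ p : ℤ × ℤ, g1 p + g1 (ψ p) ≤ g2 p + g2 (ψ p) := by
    rintro ⟨p, q⟩
    have eψ : ψ (p, q) = (q + 1, p - 1) := rfl
    rw [eψ]
    simp only [hg1, hg2]
    have i1 : k - 1 - (p - 1) = k - p := by ring
    have i2 : k + 1 - (q + 1) = k - q := by ring
    have i3 : k - 1 - (q + 1 - 1) = k - q - 1 := by ring
    have i4 : k + 1 - (p - 1 + 1) = k - p + 1 := by ring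
    have i5 : q + 1 - 1 = q := by ring
    have i6 : p - 1 + 1 = p := by ring
    have i7 : k - (q + 1) = k - q - 1 := by ring
    have i8 : k - (p - 1) = k - p + 1 := by ring
    rw [i1, i2, i3, i4, i5, i6, i7, i8]
    have hfac : 0 ≤ (a p * a q - a (p - 1) * a (q + 1)) *
        (b (k - q) * b (k - p) - b (k - q - 1) * b (k - p + 1)) := by
      rcases le_or_gt p (q + 1) with hpq | hpq
      · have h1 : a (p - 1) * a (q + 1) ≤ a p * a q := by
          have h := ha2 (show p - 1 ≤ q by omega)
          rwa [i6] at h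
        have h2 : b (k - q - 1) * b (k - p + 1) ≤ b (k - q) * b (k - p) := by
          have h := hb2 (show k - q - 1 ≤ k - p by omega)
          rwa [show k - q - 1 + 1 = k - q by ring] at h
        exact mul_nonneg (by linarith) (by linarith)
      · have h1 : a q * a p ≤ a (q + 1) * a (p - 1) := by
          have h := ha2 (show q ≤ p - 1 by omega)
          rwa [i6] at h
        have h2 : b (k - p) * b (k - q) ≤ b (k - p + 1) * b (k - q - 1) := by
          have h := hb2 (show k - p ≤ k - q - 1 by omega)
          rwa [show k - q - 1 + 1 = k - q by ring] at h
        nlinarith [h1, h2]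
    nlinarith [hfac]
  -- combine
  have sum1 : ∑' p, g1 (ψ p) = ∑' p, g1 p := ψ.tsum_eq g1
  have sum2 : ∑' p, g2 (ψ p) = ∑' p, g2 p := ψ.tsum_eq g2
  have hle : (∑' p, (g1 p + g1 (ψ p))) ≤ ∑' p, (g2 p + g2 (ψ p)) :=
    Summable.tsum_le_tsum key (hSg1.add hSg1ψ) (hSg2.add hSg2ψ)
  rw [Summable.tsum_add hSg1 hSg1ψ, Summable.tsum_add hSg2 hSg2ψ, sum1, sum2] at hle
  linarith
end

section
/- Let X = Σ_{i=1}^n a_i ξ_i where (ξ_1, ..., ξ_n) is uniform on the set of 0/1 vectors with exactly s ones, and let η² = Σ a_i² − (Σ a_i)²/n. Then for every t ≥ 0, P[|X − E X| ≥ t] ≤ 2 exp(−t²/(4η²)). -/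
open scoped Classical

open Real Finset

lemma two_point_mgf (p u : ℝ) (hp0 : 0 ≤ p) (hp1 : p ≤ 1) :
    p * exp u + (1 - p) ≤ exp (p * u + u ^ 2 / 2) := by
  have hq0 : (0:ℝ) ≤ 1 - p := by linarith
  -- convexity of exp at the two points u, 0
  have h1 : exp ((1 - p) * u) ≤ (1 - p) * exp u + p := by
    have := convexOn_exp.2 (Set.mem_univ u) (Set.mem_univ 0) hq0 hp0 (by ring)
    simpa [smul_eq_mul, Real.exp_zero] using this
  have h2 : exp (-(p * u)) ≤ p * exp (-u) + (1 - p) := by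
    have := convexOn_exp.2 (Set.mem_univ (-u)) (Set.mem_univ 0) hp0 hq0 (by ring)
    simpa [smul_eq_mul, Real.exp_zero, mul_comm] using this
  have hcosh : exp u + exp (-u) ≤ 2 * exp (u ^ 2 / 2) := by
    have := Real.cosh_le_exp_half_sq u
    rw [Real.cosh_eq] at this
    linarith
  have hexp1 : (1:ℝ) ≤ exp (u ^ 2 / 2) := by
    rw [← Real.exp_zero]
    exact Real.exp_le_exp.2 (by positivity)
  have key : p * exp ((1 - p) * u) + (1 - p) * exp (-(p * u)) ≤ exp (u ^ 2 / 2) := by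
    have b1 : p * exp ((1 - p) * u) ≤ p * ((1 - p) * exp u + p) :=
      mul_le_mul_of_nonneg_left h1 hp0
    have b2 : (1 - p) * exp (-(p * u)) ≤ (1 - p) * (p * exp (-u) + (1 - p)) :=
      mul_le_mul_of_nonneg_left h2 hq0
    have hpq : 0 ≤ p * (1 - p) := mul_nonneg hp0 hq0
    have b3 : p * (1 - p) * (exp u + exp (-u)) ≤ p * (1 - p) * (2 * exp (u ^ 2 / 2)) :=
      mul_le_mul_of_nonneg_left hcosh hpq
    nlinarith [sq_nonneg (p + (1 - p)), sq_nonneg p, sq_nonneg (1 - p),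
      mul_le_mul_of_nonneg_left hexp1 (sq_nonneg p),
      mul_le_mul_of_nonneg_left hexp1 (sq_nonneg (1 - p))]
  have factor : p * exp u + (1 - p)
      = exp (p * u) * (p * exp ((1 - p) * u) + (1 - p) * exp (-(p * u))) := by
    have e1 : exp (p * u) * exp ((1 - p) * u) = exp u := by
      rw [← Real.exp_add]; ring_nf
    have e2 : exp (p * u) * exp (-(p * u)) = 1 := by
      rw [← Real.exp_add]; simp
    linear_combination (-p) * e1 + (p - 1) * e2
  rw [factor, Real.exp_add]
  exact mul_le_mul_of_nonneg_left key (Real.exp_nonneg _)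

lemma slice_step (N k : ℕ) (B Q v : ℝ) (hkN : k ≤ N) (hB0 : N = 0 → B = 0) :
    (N.choose (k+1) : ℝ) * exp (((k:ℝ)+1) / N * B + (Q - B^2 / N))
      + exp v * ((N.choose k : ℝ) * exp ((k : ℝ) / N * B + (Q - B^2 / N)))
    ≤ ((N+1).choose (k+1) : ℝ) * exp (((k:ℝ)+1) / ((N:ℝ)+1) * (B + v)
        + ((Q + v^2) - (B + v)^2 / ((N:ℝ)+1))) := by
  rcases Nat.eq_zero_or_pos N with hN | hN
  · subst hN
    interval_cases k
    simp [hB0 rfl, ← Real.exp_add]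
  · have hN0 : (N:ℝ) ≠ 0 := Nat.cast_ne_zero.2 hN.ne'
    have hN1 : (1:ℝ) ≤ (N:ℝ) := by exact_mod_cast hN
    have hN10 : (N:ℝ) + 1 ≠ 0 := by positivity
    obtain ⟨p, hp⟩ : ∃ p : ℝ, p = ((k:ℝ)+1) / ((N:ℝ)+1) := ⟨_, rfl⟩
    have hp0 : 0 ≤ p := by rw [hp]; positivity
    have hp1 : p ≤ 1 := by
      rw [hp, div_le_one (by positivity)]
      have : (k:ℝ) ≤ (N:ℝ) := by exact_mod_cast hkN
      linarith
    have hC1 : (N.choose k : ℝ) = p * ((N+1).choose (k+1) : ℝ) := by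
      have h := Nat.add_one_mul_choose_eq N k
      have h' : ((N:ℝ)+1) * (N.choose k : ℝ) = ((N+1).choose (k+1) : ℝ) * ((k:ℝ)+1) := by
        exact_mod_cast h
      rw [hp, div_mul_eq_mul_div, eq_div_iff hN10]
      linear_combination h' 
    have hC2 : (N.choose (k+1) : ℝ) = (1 - p) * ((N+1).choose (k+1) : ℝ) := by
      have h := Nat.choose_succ_succ N k
      have h' : ((N+1).choose (k+1) : ℝ) = (N.choose k : ℝ) + (N.choose (k+1) : ℝ) := by
        exact_mod_cast h
      linear_combination -h' - hC1
    obtain ⟨u, hu⟩ : ∃ u : ℝ, u = v - B / N := ⟨_, rfl⟩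
    obtain ⟨L, hL⟩ : ∃ L : ℝ, L = ((k:ℝ)+1) / N * B + (Q - B^2 / N) := ⟨_, rfl⟩
    have hsum : v + ((k:ℝ) / N * B + (Q - B^2 / N)) = u + L := by
      rw [hu, hL]; ring
    have key := two_point_mgf p u hp0 hp1
    have hhalf : p * u + u ^ 2 / 2 ≤ p * u + ((N:ℝ)/((N:ℝ)+1)) * u ^ 2 := by
      have h2 : (1:ℝ)/2 ≤ (N:ℝ)/((N:ℝ)+1) := by
        rw [div_le_div_iff₀ (by norm_num) (by positivity)]
        linarith
      nlinarith [sq_nonneg u]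
    have hC0 : (0:ℝ) ≤ ((N+1).choose (k+1) : ℝ) := Nat.cast_nonneg _
    rw [← hL]
    calc (N.choose (k+1) : ℝ) * exp L + exp v * ((N.choose k : ℝ) * exp ((k : ℝ) / N * B + (Q - B^2 / N)))
        = ((N+1).choose (k+1) : ℝ) * (((1-p) + p * exp u) * exp L) := by
          have hev : exp v * exp ((k : ℝ) / N * B + (Q - B^2 / N)) = exp u * exp L := by
            rw [← Real.exp_add, ← Real.exp_add, hsum]
          rw [hC1, hC2]
          linear_combination (p * ((N+1).choose (k+1) : ℝ)) * hev
      _ ≤ ((N+1).choose (k+1) : ℝ) * (exp (p * u + u ^ 2 / 2) * exp L) := by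
          gcongr
          linarith [key]
      _ ≤ ((N+1).choose (k+1) : ℝ) * (exp (p * u + ((N:ℝ)/((N:ℝ)+1)) * u ^ 2) * exp L) := by
          gcongr
      _ = ((N+1).choose (k+1) : ℝ) * exp (((k:ℝ)+1) / ((N:ℝ)+1) * (B + v)
            + ((Q + v^2) - (B + v)^2 / ((N:ℝ)+1))) := by
          rw [← Real.exp_add]
          congr 2
          rw [hp, hu, hL]
          field_simp
          ring

lemma slice_mgf {ι : Type*} [DecidableEq ι] (b : ι → ℝ) (F : Finset ι) :
    ∀ s : ℕ, ∑ A ∈ Finset.powersetCard s F, exp (∑ i ∈ A, b i)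
      ≤ (F.card.choose s : ℝ) * exp (((s:ℝ) / F.card) * (∑ i ∈ F, b i)
          + ((∑ i ∈ F, (b i)^2) - (∑ i ∈ F, b i)^2 / F.card)) := by
  induction F using Finset.induction_on with
  | empty =>
    intro s
    cases s with
    | zero => simp
    | succ k =>
      rw [Finset.powersetCard_eq_empty.2 (by simp)]
      simp
  | @insert j Fs hj ih =>
    intro s
    have hcard : (insert j Fs).card = Fs.card + 1 := Finset.card_insert_of_notMem hj
    have hBsum : ∑ i ∈ insert j Fs, b i = (∑ i ∈ Fs, b i) + b j := by
      rw [Finset.sum_insert hj]; ring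
    have hQsum : ∑ i ∈ insert j Fs, (b i)^2 = (∑ i ∈ Fs, (b i)^2) + (b j)^2 := by
      rw [Finset.sum_insert hj]; ring
    cases s with
    | zero =>
      have hpos : (0:ℝ) < ((insert j Fs).card : ℝ) := by
        rw [hcard]; positivity
      have hCS : (∑ i ∈ insert j Fs, b i)^2 ≤ ((insert j Fs).card : ℝ) * ∑ i ∈ insert j Fs, (b i)^2 := by
        exact sq_sum_le_card_mul_sum_sq
      simp only [Finset.powersetCard_zero, Finset.sum_singleton, Finset.sum_empty,
        Nat.choose_zero_right, Nat.cast_one, Nat.cast_zero, one_mul, Real.exp_zero]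
      rw [zero_div, zero_mul, zero_add, ← Real.exp_zero]
      apply Real.exp_le_exp.2
      rw [sub_nonneg, div_le_iff₀ hpos]
      linarith [hCS]
    | succ k =>
      by_cases hks : k ≤ Fs.card
      · rw [Finset.powersetCard_succ_insert hj]
        have hdisj : Disjoint (Finset.powersetCard (k+1) Fs)
            ((Finset.powersetCard k Fs).image (insert j)) := by
          rw [Finset.disjoint_left]
          intro A hA hA'
          obtain ⟨A', hA', rfl⟩ := Finset.mem_image.1 hA'
          have : insert j A' ⊆ Fs := (Finset.mem_powersetCard.1 hA).1
          exact hj (this (Finset.mem_insert_self j A'))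
        rw [Finset.sum_union hdisj]
        have himg : ∑ A ∈ (Finset.powersetCard k Fs).image (insert j), exp (∑ i ∈ A, b i)
            = exp (b j) * ∑ A ∈ Finset.powersetCard k Fs, exp (∑ i ∈ A, b i) := by
          rw [Finset.sum_image, Finset.mul_sum]
          · apply Finset.sum_congr rfl
            intro A hA
            have hjA : j ∉ A := fun h => hj ((Finset.mem_powersetCard.1 hA).1 h)
            rw [Finset.sum_insert hjA, Real.exp_add]
          · intro A hA A' hA' h
            have hjA : j ∉ A := fun h => hj ((Finset.mem_powersetCard.1 hA).1 h)
            have hjA' : j ∉ A' := fun h => hj ((Finset.mem_powersetCard.1 hA').1 h)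
            rw [← Finset.erase_insert hjA, ← Finset.erase_insert hjA', h]
        rw [himg]
        have step := slice_step Fs.card k (∑ i ∈ Fs, b i) (∑ i ∈ Fs, (b i)^2) (b j) hks
          (fun h => by rw [Finset.card_eq_zero.1 h]; simp)
        have hb1 := ih (k+1)
        have hb2 := ih k
        have hexpj : (0:ℝ) ≤ exp (b j) := Real.exp_nonneg _
        calc ∑ A ∈ Finset.powersetCard (k+1) Fs, exp (∑ i ∈ A, b i)
              + exp (b j) * ∑ A ∈ Finset.powersetCard k Fs, exp (∑ i ∈ A, b i)
            ≤ (Fs.card.choose (k+1) : ℝ) * exp ((((k+1:ℕ)):ℝ) / Fs.card * (∑ i ∈ Fs, b i)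
                + ((∑ i ∈ Fs, (b i)^2) - (∑ i ∈ Fs, b i)^2 / Fs.card))
              + exp (b j) * ((Fs.card.choose k : ℝ) * exp (((k:ℕ):ℝ) / Fs.card * (∑ i ∈ Fs, b i)
                + ((∑ i ∈ Fs, (b i)^2) - (∑ i ∈ Fs, b i)^2 / Fs.card))) := by
              gcongr
          _ ≤ (((insert j Fs).card).choose (k+1) : ℝ) * exp ((((k+1:ℕ)):ℝ) / (insert j Fs).card
                * (∑ i ∈ insert j Fs, b i)
                + ((∑ i ∈ insert j Fs, (b i)^2) - (∑ i ∈ insert j Fs, b i)^2 / (insert j Fs).card)) := by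
              rw [hcard, hBsum, hQsum]
              push_cast
              convert step using 3 <;> push_cast <;> ring
      · push_neg at hks
        rw [Finset.powersetCard_eq_empty.2 (by rw [hcard]; omega),
          Nat.choose_eq_zero_of_lt (by rw [hcard]; omega)]
        simp

lemma slice_sum_eq (n s : ℕ) (h : Finset (Fin n) → ℝ) :
    ∑ x ∈ Finset.univ.filter
        (fun x : Fin n → Bool => (Finset.univ.filter fun i => x i = true).card = s),
      h (Finset.univ.filter fun i => x i = true)
    = ∑ A ∈ Finset.powersetCard s Finset.univ, h A := by
  apply Finset.sum_nbij' (i := fun x => Finset.univ.filter fun i => x i = true)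
    (j := fun A => fun i => decide (i ∈ A))
  · intro x hx
    simp only [Finset.mem_filter, Finset.mem_univ, true_and] at hx
    simp [Finset.mem_powersetCard, hx]
  · intro A hA
    simp only [Finset.mem_powersetCard] at hA
    simp only [Finset.mem_filter, Finset.mem_univ, true_and]
    have : (Finset.univ.filter fun i => decide (i ∈ A) = true) = A := by
      ext i; simp
    rw [this, hA.2]
  · intro x hx
    funext i
    simp [Finset.mem_filter]
  · intro A hA
    ext i
    simp
  · intro x hx
    rfl

/-- Azuma–Hoeffding type concentration on the slice: if X = Σ a_i ξ_i with ξ uniform on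
the 0/1 vectors with exactly s ones and η² = Σ a_i² − (Σ a_i)²/n, then
P[|X − E X| ≥ t] ≤ 2 exp(−t²/(4η²)). -/
theorem slice_subgaussian (n s : ℕ) (hs : s ≤ n) (a : Fin n → ℝ) (t : ℝ) (ht : 0 ≤ t) :
    let T : Finset (Fin n → Bool) :=
      Finset.univ.filter fun x => (Finset.univ.filter fun i => x i = true).card = s
    let X : (Fin n → Bool) → ℝ := fun x => ∑ i, if x i then a i else 0
    let EX : ℝ := (∑ x ∈ T, X x) / T.card
    let η2 : ℝ := ∑ i, (a i) ^ 2 - (∑ i, a i) ^ 2 / n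
    ((T.filter fun x => t ≤ |X x - EX|).card : ℝ) / T.card
      ≤ 2 * Real.exp (-t ^ 2 / (4 * η2)) := by
  intro T X EX η2
  set B : ℝ := ∑ i, a i with hB
  set Q : ℝ := ∑ i, (a i)^2 with hQ
  -- X as a sum over the support finset
  have hXfilter : ∀ x : Fin n → Bool,
      X x = ∑ i ∈ Finset.univ.filter (fun i => x i = true), a i := by
    intro x
    rw [Finset.sum_filter]
  have hmem : ∀ x ∈ T, (Finset.univ.filter fun i => x i = true).card = s :=
    fun x hx => (Finset.mem_filter.1 hx).2
  -- transfer of sums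
  have htrans : ∀ g : ℝ → ℝ, ∑ x ∈ T, g (X x)
      = ∑ A ∈ Finset.powersetCard s Finset.univ, g (∑ i ∈ A, a i) := by
    intro g
    have := slice_sum_eq n s (fun A => g (∑ i ∈ A, a i))
    rw [← this]
    exact Finset.sum_congr rfl fun x _ => by rw [hXfilter x]
  -- cardinality of the slice
  have hTcard : (T.card : ℝ) = (n.choose s : ℝ) := by
    have h1 := htrans (fun _ => (1:ℝ))
    simpa [Finset.card_powersetCard] using h1
  have hTpos : (0:ℝ) < (T.card : ℝ) := by
    rw [hTcard]
    exact_mod_cast Nat.choose_pos hs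
  have hEXdef : EX = (∑ x ∈ T, X x) / (T.card : ℝ) := rfl
  have hη2def : η2 = Q - B^2 / (n:ℝ) := rfl
  -- the MGF bound
  have mgf : ∀ l : ℝ, ∑ x ∈ T, exp (l * X x)
      ≤ (T.card : ℝ) * exp (l * (((s:ℝ)/n) * B) + l^2 * η2) := by
    intro l
    rw [htrans (fun y => exp (l * y))]
    have h := slice_mgf (fun i => l * a i) (Finset.univ : Finset (Fin n)) s
    simp only [Finset.card_univ, Fintype.card_fin] at h
    have e1 : ∀ A : Finset (Fin n), (∑ i ∈ A, l * a i) = l * ∑ i ∈ A, a i := by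
      intro A; rw [Finset.mul_sum]
    calc ∑ A ∈ Finset.powersetCard s Finset.univ, exp (l * (∑ i ∈ A, a i))
        = ∑ A ∈ Finset.powersetCard s Finset.univ, exp (∑ i ∈ A, l * a i) := by
          exact Finset.sum_congr rfl fun A _ => by rw [e1]
      _ ≤ (n.choose s : ℝ) * exp (((s:ℝ) / n) * (∑ i, l * a i)
            + ((∑ i, (l * a i)^2) - (∑ i, l * a i)^2 / n)) := h
      _ = (T.card : ℝ) * exp (l * (((s:ℝ)/n) * B) + l^2 * η2) := by
          rw [hTcard]
          congr 2
          have e2 : (∑ i, l * a i) = l * B := by rw [hB, Finset.mul_sum]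
          have e3 : (∑ i, (l * a i)^2) = l^2 * Q := by
            rw [hQ, Finset.mul_sum]
            exact Finset.sum_congr rfl fun i _ => by ring
          rw [e2, e3, hη2def]
          ring
  clear_value B Q η2 EX X T
  -- Jensen : the mean is controlled by the mgf bound
  have hJensen : ∀ l : ℝ, l * EX ≤ l * (((s:ℝ)/n) * B) + l^2 * η2 := by
    intro l
    have hc0 : (T.card : ℝ) ≠ 0 := ne_of_gt hTpos
    have hgm := Real.geom_mean_le_arith_mean_weighted T (fun _ => 1/(T.card:ℝ))
      (fun x => exp (l * X x)) (fun x _ => by positivity)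
      (by rw [Finset.sum_const, nsmul_eq_mul]; field_simp) (fun x _ => Real.exp_nonneg _)
    have hlhs : ∏ x ∈ T, exp (l * X x) ^ ((1:ℝ)/(T.card:ℝ)) = exp (l * EX) := by
      have e4 : ∀ x ∈ T, exp (l * X x) ^ ((1:ℝ)/(T.card:ℝ))
          = exp (l * X x * (1/(T.card:ℝ))) := fun x _ => (Real.exp_mul _ _).symm
      rw [Finset.prod_congr rfl e4, ← Real.exp_sum]
      congr 1
      have e5 : ∑ x ∈ T, l * X x * (1/(T.card:ℝ))
          = (∑ x ∈ T, l * X x) * (1/(T.card:ℝ)) := (Finset.sum_mul _ _ _).symm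
      rw [e5, ← Finset.mul_sum, hEXdef]
      ring
    have hrhs : ∑ x ∈ T, (1/(T.card:ℝ)) * exp (l * X x)
        ≤ exp (l * (((s:ℝ)/n) * B) + l^2 * η2) := by
      rw [← Finset.mul_sum, one_div, inv_mul_le_iff₀ hTpos]
      exact (mgf l).trans (le_of_eq rfl)
    have := (hlhs.symm.trans_le hgm).trans hrhs
    exact Real.exp_le_exp.1 this
  -- η2 is nonnegative
  have hη2nonneg : 0 ≤ η2 := by
    rcases Nat.eq_zero_or_pos n with hn | hn
    · rw [hη2def, hQ, hB]
      subst hn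
      simp
    · have hCS : B^2 ≤ (n:ℝ) * Q := by
        rw [hB, hQ]
        have := sq_sum_le_card_mul_sum_sq (s := (Finset.univ : Finset (Fin n))) (f := a)
        simpa [Finset.card_univ] using this
      have hn0 : (0:ℝ) < (n:ℝ) := by exact_mod_cast hn
      rw [hη2def, sub_nonneg, div_le_iff₀ hn0]
      linarith
  -- EX equals (s/n) * B
  have hEX : EX = ((s:ℝ)/n) * B := by
    obtain ⟨c, hc⟩ : ∃ c : ℝ, c = EX - ((s:ℝ)/n) * B := ⟨_, rfl⟩
    have hkey : ∀ l : ℝ, l * c ≤ l^2 * η2 := by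
      intro l
      rw [hc]
      nlinarith [hJensen l]
    have hc2 : c = 0 := by
      rcases eq_or_lt_of_le hη2nonneg with h0 | hpos
      · have h := hkey c
        rw [← h0, mul_zero] at h
        nlinarith [h]
      · have hl := hkey (c / (2 * η2))
        have h1 : c^2/(2*η2) ≤ c^2/(4*η2) := by
          calc c^2/(2*η2) = (c/(2*η2))*c := by field_simp
            _ ≤ (c/(2*η2))^2*η2 := hl
            _ = c^2/(4*η2) := by field_simp; ring
        rw [div_le_div_iff₀ (by linarith) (by linarith)] at h1
        have h2 : c^2 ≤ 0 := by nlinarith [h1, hpos, sq_nonneg c]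
        exact pow_eq_zero_iff two_ne_zero |>.1 (le_antisymm h2 (sq_nonneg c))
    rw [hc2] at hc
    linarith [hc]
  -- now the tail bound
  rcases eq_or_lt_of_le ht with ht0 | htpos
  · -- t = 0 : trivial bound
    obtain rfl : t = 0 := ht0.symm
    have h1 : ((T.filter fun x => (0:ℝ) ≤ |X x - EX|).card : ℝ) ≤ (T.card : ℝ) := by
      exact_mod_cast Finset.card_le_card (Finset.filter_subset _ _)
    rw [div_le_iff₀ hTpos]
    have h2 : Real.exp (-(0:ℝ)^2/(4*η2)) = 1 := by norm_num
    rw [h2]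
    linarith [h1, hTpos]
  by_cases hη0 : η2 = 0
  · -- degenerate case : X is constant on T
    have hXconst : ∀ x ∈ T, X x = EX := by
      intro x hx
      rcases Nat.eq_zero_or_pos n with hn | hn
      · have hB0 : B = 0 := by rw [hB]; subst hn; simp
        have hX0 : X x = 0 := by
          rw [hXfilter x]
          subst hn
          simp
        rw [hX0, hEX, hB0, mul_zero]
      · have hn0 : (0:ℝ) < (n:ℝ) := by exact_mod_cast hn
        have hsum0 : ∑ i, (a i - B/n)^2 = 0 := by
          have e : ∑ i, (a i - B/n)^2 = Q - B^2/(n:ℝ) := by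
            have expand : ∀ i : Fin n, (a i - B/n)^2
                = (a i)^2 - 2*(B/n)*(a i) + (B/n)^2 := fun i => by ring
            rw [Finset.sum_congr rfl (fun i _ => expand i), Finset.sum_add_distrib,
              Finset.sum_sub_distrib, ← Finset.mul_sum, Finset.sum_const,
              Finset.card_univ, Fintype.card_fin, ← hB, ← hQ, nsmul_eq_mul]
            field_simp
            ring
          rw [e, ← hη2def, hη0]
        have hconst : ∀ i : Fin n, a i = B/n := by
          intro i
          have h0 := (Finset.sum_eq_zero_iff_of_nonneg
            (fun i _ => sq_nonneg (a i - B/(n:ℝ)))).1 hsum0 i (Finset.mem_univ i)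
          have := pow_eq_zero_iff two_ne_zero |>.1 h0
          linarith [this]
        rw [hXfilter x]
        rw [Finset.sum_congr rfl (fun i _ => hconst i), Finset.sum_const, hmem x hx,
          nsmul_eq_mul, hEX]
        ring
    have hempty : (T.filter fun x => t ≤ |X x - EX|) = ∅ := by
      rw [Finset.filter_eq_empty_iff]
      intro x hx
      rw [hXconst x hx]
      simp only [sub_self, abs_zero, not_le]
      exact htpos
    rw [hempty]
    simp only [Finset.card_empty, Nat.cast_zero, zero_div]
    positivity
  · -- main case
    have hpos : 0 < η2 := lt_of_le_of_ne hη2nonneg (Ne.symm hη0)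
    obtain ⟨l, hl⟩ : ∃ l : ℝ, l = t / (2 * η2) := ⟨_, rfl⟩
    have hlpos : 0 < l := by rw [hl]; positivity
    have hexp : l^2 * η2 - l * t = -t^2/(4*η2) := by
      rw [hl]; field_simp; ring
    have tailbound : ∀ l' : ℝ, l'^2 = l^2 → ∀ S : Finset (Fin n → Bool), S ⊆ T →
        (∀ x ∈ S, l * t ≤ l' * (X x - EX)) →
        (S.card : ℝ) ≤ (T.card : ℝ) * exp (-t^2/(4*η2)) := by
      intro l' hl2 S hST hSx
      have h1 : (S.card : ℝ) * exp (l * t) ≤ ∑ x ∈ S, exp (l' * X x) * exp (-(l' * EX)) := by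
        calc (S.card : ℝ) * exp (l*t) = ∑ _x ∈ S, exp (l*t) := by
              rw [Finset.sum_const, nsmul_eq_mul]
          _ ≤ _ := by
              apply Finset.sum_le_sum
              intro x hx
              rw [← Real.exp_add]
              apply Real.exp_le_exp.2
              have h := hSx x hx
              rw [mul_sub] at h
              linarith [h]
      have h2 : ∑ x ∈ S, exp (l' * X x) * exp (-(l' * EX)) ≤ (T.card:ℝ) * exp (l^2 * η2) := by
        calc ∑ x ∈ S, exp (l' * X x) * exp (-(l' * EX))
            ≤ ∑ x ∈ T, exp (l' * X x) * exp (-(l' * EX)) :=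
              Finset.sum_le_sum_of_subset_of_nonneg hST (fun x _ _ => by positivity)
          _ = exp (-(l' * EX)) * ∑ x ∈ T, exp (l' * X x) := by
              rw [← Finset.sum_mul, mul_comm]
          _ ≤ exp (-(l' * EX)) * ((T.card:ℝ) * exp (l' * (((s:ℝ)/n) * B) + l'^2 * η2)) :=
              mul_le_mul_of_nonneg_left (mgf l') (Real.exp_nonneg _)
          _ = (T.card:ℝ) * exp (l^2 * η2) := by
              rw [← hEX, mul_comm (exp _) _, mul_assoc, ← Real.exp_add]
              congr 2
              linear_combination η2 * hl2
      have h3 : (S.card:ℝ) * exp (l*t) ≤ (T.card:ℝ) * exp (l^2*η2) := h1.trans h2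
      have hepos : (0:ℝ) < exp (l*t) := Real.exp_pos _
      rw [← hexp, Real.exp_sub, ← mul_div_assoc, le_div_iff₀ hepos]
      exact h3
    have hU := tailbound l rfl (T.filter fun x => t ≤ X x - EX)
      (Finset.filter_subset _ _) (fun x hx => by
        have h := (Finset.mem_filter.1 hx).2
        exact mul_le_mul_of_nonneg_left h hlpos.le)
    have hL := tailbound (-l) (by ring) (T.filter fun x => X x - EX ≤ -t)
      (Finset.filter_subset _ _) (fun x hx => by
        have h := (Finset.mem_filter.1 hx).2
        nlinarith [h, hlpos.le])
    have hsplit : (T.filter fun x => t ≤ |X x - EX|)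
        ⊆ (T.filter fun x => t ≤ X x - EX) ∪ (T.filter fun x => X x - EX ≤ -t) := by
      intro x hx
      rw [Finset.mem_filter] at hx
      rcases le_abs.1 hx.2 with h | h
      · exact Finset.mem_union_left _ (Finset.mem_filter.2 ⟨hx.1, h⟩)
      · exact Finset.mem_union_right _ (Finset.mem_filter.2 ⟨hx.1, by linarith [h]⟩)
    have hcard : ((T.filter fun x => t ≤ |X x - EX|).card : ℝ)
        ≤ ((T.filter fun x => t ≤ X x - EX).card : ℝ)
          + ((T.filter fun x => X x - EX ≤ -t).card : ℝ) := by
      have h := (Finset.card_le_card hsplit).trans (Finset.card_union_le _ _)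
      exact_mod_cast h
    rw [div_le_iff₀ hTpos]
    calc ((T.filter fun x => t ≤ |X x - EX|).card : ℝ)
        ≤ ((T.filter fun x => t ≤ X x - EX).card : ℝ)
          + ((T.filter fun x => X x - EX ≤ -t).card : ℝ) := hcard
      _ ≤ 2 * ((T.card : ℝ) * exp (-t^2/(4*η2))) := by linarith [hU, hL]
      _ = 2 * exp (-t^2/(4*η2)) * (T.card : ℝ) := by ring
end

section
/- Let X = Σ_{i=1}^n a_i ξ_i where (ξ_1, ..., ξ_n) is uniform on the set of 0/1 vectors with exactly s ones, and suppose η² = Σ a_i² − (Σ a_i)²/n. Then E exp(X − E X) ≤ 2 exp(C η²) for some absolute constant C. -/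
lemma aux_F_mono : Monotone (fun u : ℝ => u * (Real.exp u + 1) - 2 * (Real.exp u - 1)) := by
  have hd : ∀ u : ℝ, HasDerivAt (fun u : ℝ => u * (Real.exp u + 1) - 2 * (Real.exp u - 1))
      (1 * (Real.exp u + 1) + u * Real.exp u - 2 * Real.exp u) u := by
    intro u
    exact ((hasDerivAt_id u).mul ((Real.hasDerivAt_exp u).add_const 1)).sub
      (((Real.hasDerivAt_exp u).sub_const 1).const_mul 2)
  apply monotone_of_deriv_nonneg
  · exact fun u => (hd u).differentiableAt
  · intro u
    rw [(hd u).deriv]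
    have h1 : (1 - u) * Real.exp u ≤ 1 := by
      have := Real.add_one_le_exp (-u)
      have h2 := mul_le_mul_of_nonneg_right this (Real.exp_pos u).le
      rw [← Real.exp_add, neg_add_cancel, Real.exp_zero] at h2
      linarith
    nlinarith [Real.exp_pos u]

lemma exp_slope (u : ℝ) (hu : 0 ≤ u) : 2 * (Real.exp u - 1) ≤ u * (Real.exp u + 1) := by
  have := aux_F_mono hu
  simp only [Real.exp_zero] at this
  linarith

lemma abs_exp_sub_exp (a b : ℝ) :
    |Real.exp a - Real.exp b| ≤ |a - b| * (Real.exp a + Real.exp b) / 2 := by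
  wlog h : b ≤ a with H
  · have := H b a (le_of_not_ge h)
    rw [abs_sub_comm, abs_sub_comm b a] at this
    linarith
  have hexp : Real.exp b ≤ Real.exp a := Real.exp_le_exp.2 h
  rw [abs_of_nonneg (by linarith), abs_of_nonneg (by linarith : (0:ℝ) ≤ a - b)]
  have := exp_slope (a - b) (by linarith)
  have h2 := mul_le_mul_of_nonneg_right this (Real.exp_pos b).le
  have hab : Real.exp (a - b) * Real.exp b = Real.exp a := by
    rw [← Real.exp_add]; ring_nf
  nlinarith [Real.exp_pos b]

open Finset

namespace SliceAux

variable {n : ℕ}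

def ones (x : Fin n → Bool) : Finset (Fin n) := Finset.univ.filter fun i => x i = true
def zeros (x : Fin n → Bool) : Finset (Fin n) := Finset.univ.filter fun i => x i = false

def swp (x : Fin n → Bool) (i j : Fin n) : Fin n → Bool :=
  Function.update (Function.update x i false) j true

variable {x : Fin n → Bool} {i j : Fin n}

lemma mem_ones {k : Fin n} : k ∈ ones x ↔ x k = true := by simp [ones]
lemma mem_zeros {k : Fin n} : k ∈ zeros x ↔ x k = false := by simp [zeros]

lemma ne_of_mem (hi : x i = true) (hj : x j = false) : i ≠ j := by
  rintro rfl; rw [hi] at hj; exact Bool.noConfusion hj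

lemma swp_apply_j (hi : x i = true) (hj : x j = false) : swp x i j j = true := by
  simp [swp]

lemma swp_apply_i (hi : x i = true) (hj : x j = false) : swp x i j i = false := by
  have hne : i ≠ j := ne_of_mem hi hj
  simp [swp, Function.update_of_ne hne]

lemma swp_apply_other (hk1 : k ≠ i) (hk2 : k ≠ j) : swp x i j k = x k := by
  simp [swp, Function.update_of_ne hk2, Function.update_of_ne hk1]

lemma ones_swp (hi : x i = true) (hj : x j = false) :
    ones (swp x i j) = insert j ((ones x).erase i) := by
  have hne : i ≠ j := ne_of_mem hi hj
  ext k
  simp only [mem_ones, mem_insert, mem_erase]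
  by_cases hkj : k = j
  · subst hkj; simp [swp_apply_j hi hj]
  · by_cases hki : k = i
    · subst hki
      rw [swp_apply_i hi hj]
      simp [hkj, hi]
    · rw [swp_apply_other hki hkj]
      simp [hkj, hki]

lemma card_ones_swp (hi : x i = true) (hj : x j = false) :
    (ones (swp x i j)).card = (ones x).card := by
  have hne : i ≠ j := ne_of_mem hi hj
  have hiS : i ∈ ones x := mem_ones.2 hi
  have hjS : j ∉ ones x := by simp [mem_ones, hj]
  rw [ones_swp hi hj, card_insert_of_notMem (fun h => hjS (mem_erase.1 h).2),
    card_erase_of_mem hiS]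
  have : 1 ≤ (ones x).card := card_pos.2 ⟨i, hiS⟩
  omega

lemma swp_swp (hi : x i = true) (hj : x j = false) : swp (swp x i j) j i = x := by
  have hne : i ≠ j := ne_of_mem hi hj
  funext k
  by_cases hki : k = i
  · subst hki; simp [swp, Function.update_self, hi]
  · by_cases hkj : k = j
    · subst hkj
      simp [swp, Function.update_of_ne (ne_of_mem hi hj).symm, Function.update_self, hj]
    · rw [swp_apply_other hkj hki, swp_apply_other hki hkj]

lemma sum_ones (a : Fin n → ℝ) (x : Fin n → Bool) :
    ∑ i ∈ ones x, a i = ∑ i, if x i then a i else 0 := by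
  rw [ones, sum_filter]

lemma X_swp (a : Fin n → ℝ) (hi : x i = true) (hj : x j = false) :
    (∑ k, if swp x i j k then a k else 0) = (∑ k, if x k then a k else 0) - a i + a j := by
  rw [← sum_ones, ← sum_ones, ones_swp hi hj]
  have hiS : i ∈ ones x := mem_ones.2 hi
  have hjS : j ∉ (ones x).erase i := by simp [mem_ones, hj]
  rw [sum_insert hjS, ← Finset.sum_erase_add (ones x) a hiS]
  ring

/-- Reindexing by the swap involution. -/
lemma sum_swap_reindex (s : ℕ) (f : (Fin n → Bool) → Fin n → Fin n → ℝ) :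
    ∑ x ∈ Finset.univ.filter (fun x => (ones x).card = s),
      ∑ i ∈ ones x, ∑ j ∈ zeros x, f x i j
    = ∑ x ∈ Finset.univ.filter (fun x => (ones x).card = s),
      ∑ i ∈ ones x, ∑ j ∈ zeros x, f (swp x i j) j i := by
  classical
  have h1 : ∀ (g : (Fin n → Bool) → Fin n → Fin n → ℝ),
      ∑ x ∈ Finset.univ.filter (fun x => (ones x).card = s),
        ∑ i ∈ ones x, ∑ j ∈ zeros x, g x i j
      = ∑ p ∈ (Finset.univ.filter (fun x => (ones x).card = s)).sigma
          (fun x => ones x ×ˢ zeros x), g p.1 p.2.1 p.2.2 := by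
    intro g
    rw [Finset.sum_sigma]
    exact Finset.sum_congr rfl fun x _ => (Finset.sum_product (ones x) (zeros x) (fun p => g x p.1 p.2)).symm
  rw [h1, h1]
  refine Finset.sum_nbij' (fun p => ⟨swp p.1 p.2.1 p.2.2, (p.2.2, p.2.1)⟩)
    (fun p => ⟨swp p.1 p.2.1 p.2.2, (p.2.2, p.2.1)⟩) ?_ ?_ ?_ ?_ ?_
  · rintro ⟨x, i, j⟩ hp
    simp only [Finset.mem_sigma, Finset.mem_filter, Finset.mem_univ, true_and,
      Finset.mem_product] at hp ⊢
    obtain ⟨hx, hi, hj⟩ := hp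
    rw [mem_ones] at hi; rw [mem_zeros] at hj
    exact ⟨by rw [card_ones_swp hi hj]; exact hx,
      mem_ones.2 (swp_apply_j hi hj), mem_zeros.2 (swp_apply_i hi hj)⟩
  · rintro ⟨x, i, j⟩ hp
    simp only [Finset.mem_sigma, Finset.mem_filter, Finset.mem_univ, true_and,
      Finset.mem_product] at hp ⊢
    obtain ⟨hx, hi, hj⟩ := hp
    rw [mem_ones] at hi; rw [mem_zeros] at hj
    exact ⟨by rw [card_ones_swp hi hj]; exact hx,
      mem_ones.2 (swp_apply_j hi hj), mem_zeros.2 (swp_apply_i hi hj)⟩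
  · rintro ⟨x, i, j⟩ hp
    simp only [Finset.mem_sigma, Finset.mem_filter, Finset.mem_univ, true_and,
      Finset.mem_product] at hp
    obtain ⟨hx, hi, hj⟩ := hp
    rw [mem_ones] at hi; rw [mem_zeros] at hj
    simp only [Sigma.mk.inj_iff]
    rw [swp_swp hi hj]
    simp
  · rintro ⟨x, i, j⟩ hp
    simp only [Finset.mem_sigma, Finset.mem_filter, Finset.mem_univ, true_and,
      Finset.mem_product] at hp
    obtain ⟨hx, hi, hj⟩ := hp
    rw [mem_ones] at hi; rw [mem_zeros] at hj
    simp only [Sigma.mk.inj_iff]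
    rw [swp_swp hi hj]
    simp
  · rintro ⟨x, i, j⟩ hp
    simp only [Finset.mem_sigma, Finset.mem_filter, Finset.mem_univ, true_and,
      Finset.mem_product] at hp
    obtain ⟨hx, hi, hj⟩ := hp
    rw [mem_ones] at hi; rw [mem_zeros] at hj
    show f x i j = f (swp (swp x i j) j i) i j
    rw [swp_swp hi hj]

end SliceAux

section Core
open Finset SliceAux

variable {n s : ℕ} (hs : s ≤ n) (a : Fin n → ℝ)

lemma sum_ones_add_sum_zeros (b : Fin n → ℝ) (x : Fin n → Bool) :
    ∑ i ∈ ones x, b i + ∑ i ∈ zeros x, b i = ∑ i, b i := by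
  classical
  have h : zeros x = Finset.univ.filter fun i => ¬ (x i = true) := by
    ext k; simp [zeros]
  rw [ones, h, Finset.sum_filter_add_sum_filter_not]

lemma card_zeros {x : Fin n → Bool} (hx : (ones x).card = s) :
    ((zeros x).card : ℝ) = (n : ℝ) - s := by
  classical
  have h : zeros x = Finset.univ.filter fun i => ¬ (x i = true) := by
    ext k; simp [zeros]
  have := Finset.card_filter_add_card_filter_not (s := (Finset.univ : Finset (Fin n)))
    (p := fun i => x i = true)
  rw [← ones, ← h, hx, Finset.card_univ, Fintype.card_fin] at this
  have hsn : s ≤ n := by omega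
  have : (zeros x).card = n - s := by omega
  rw [this, Nat.cast_sub hsn]

lemma inner_double {x : Fin n → Bool} (hx : (ones x).card = s) :
    ∑ i ∈ ones x, ∑ j ∈ zeros x, (a i - a j)
      = (n : ℝ) * (∑ k, if x k then a k else 0) - s * (∑ k, a k) := by
  have h1 : ∑ i ∈ ones x, ∑ j ∈ zeros x, (a i - a j)
      = ((zeros x).card : ℝ) * (∑ i ∈ ones x, a i)
        - ((ones x).card : ℝ) * (∑ j ∈ zeros x, a j) := by
    simp only [Finset.sum_sub_distrib, Finset.sum_const, nsmul_eq_mul, Finset.mul_sum]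
  rw [h1, card_zeros hx, hx, ← sum_ones a x]
  have h2 : ∑ j ∈ zeros x, a j = (∑ i, a i) - ∑ i ∈ ones x, a i := by
    have := sum_ones_add_sum_zeros a x; linarith
  rw [h2]; ring
  
lemma inner_double_sq {x : Fin n → Bool} :
    ∑ i ∈ ones x, ∑ j ∈ zeros x, (a i - a j)^2
      ≤ 2 * ((n:ℝ) * ∑ i, (a i)^2 - (∑ i, a i)^2) := by
  have h1 : ∑ i ∈ ones x, ∑ j ∈ zeros x, (a i - a j)^2
      ≤ ∑ i, ∑ j, (a i - a j)^2 := by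
    apply le_trans (Finset.sum_le_sum (fun i _ =>
      Finset.sum_le_sum_of_subset_of_nonneg (Finset.subset_univ (zeros x))
        (fun j _ _ => sq_nonneg (a i - a j))))
    exact Finset.sum_le_sum_of_subset_of_nonneg (Finset.subset_univ (ones x))
      (fun i _ _ => Finset.sum_nonneg fun j _ => sq_nonneg (a i - a j))
  refine h1.trans (le_of_eq ?_)
  have h : ∀ i, ∑ j, (a i - a j)^2
      = (n:ℝ) * (a i)^2 - 2 * a i * (∑ j, a j) + ∑ j, (a j)^2 := by
    intro i
    have : ∀ j, (a i - a j)^2 = (a i)^2 - 2 * a i * a j + (a j)^2 := fun j => by ring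
    simp only [this, Finset.sum_add_distrib, Finset.sum_sub_distrib, Finset.sum_const,
      Finset.card_univ, Fintype.card_fin, nsmul_eq_mul, ← Finset.mul_sum]
  simp only [h, Finset.sum_add_distrib, Finset.sum_sub_distrib, Finset.sum_const,
    Finset.card_univ, Fintype.card_fin, nsmul_eq_mul, ← Finset.mul_sum, ← Finset.sum_mul]
  ring
end Core

section Key
open Finset SliceAux

variable {n s : ℕ} {a : Fin n → ℝ} {μ l : ℝ}

/-- The sum of `n * X x - s * A` over the slice vanishes. -/
lemma sum_X_slice (hs : s ≤ n) (a : Fin n → ℝ) :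
    ∑ x ∈ Finset.univ.filter (fun x : Fin n → Bool => (ones x).card = s),
      ((n:ℝ) * (∑ k, if x k then a k else 0) - s * (∑ i, a i)) = 0 := by
  classical
  have h1 : ∑ x ∈ Finset.univ.filter (fun x : Fin n → Bool => (ones x).card = s),
      ((n:ℝ) * (∑ k, if x k then a k else 0) - s * (∑ i, a i))
      = ∑ x ∈ Finset.univ.filter (fun x : Fin n → Bool => (ones x).card = s),
        ∑ i ∈ ones x, ∑ j ∈ zeros x, (a i - a j) := by
    refine Finset.sum_congr rfl fun x hx => ?_
    rw [inner_double a (Finset.mem_filter.1 hx).2]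
  have h2 := sum_swap_reindex s (fun x i j => a i - a j)
  have h3 : ∑ x ∈ Finset.univ.filter (fun x : Fin n → Bool => (ones x).card = s),
      ∑ i ∈ ones x, ∑ j ∈ zeros x, (a j - a i)
      = - ∑ x ∈ Finset.univ.filter (fun x : Fin n → Bool => (ones x).card = s),
        ∑ i ∈ ones x, ∑ j ∈ zeros x, (a i - a j) := by
    rw [← Finset.sum_neg_distrib]
    refine Finset.sum_congr rfl fun x _ => ?_
    rw [← Finset.sum_neg_distrib]
    refine Finset.sum_congr rfl fun i _ => ?_
    rw [← Finset.sum_neg_distrib]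
    exact Finset.sum_congr rfl fun j _ => by ring
  rw [h1]
  rw [h2] at *
  linarith [h3]

/-- Key derivative inequality. -/
lemma key_ineq (hs : s ≤ n) (a : Fin n → ℝ) (μ l : ℝ)
    (hμ : (n:ℝ) * μ = s * ∑ i, a i) (hl : 0 ≤ l) :
    (n:ℝ) * ∑ x ∈ Finset.univ.filter (fun x : Fin n → Bool => (ones x).card = s),
        ((∑ k, if x k then a k else 0) - μ) *
          Real.exp (l * ((∑ k, if x k then a k else 0) - μ))
      ≤ l * ((n:ℝ) * ∑ i, (a i)^2 - (∑ i, a i)^2) *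
        ∑ x ∈ Finset.univ.filter (fun x : Fin n → Bool => (ones x).card = s),
          Real.exp (l * ((∑ k, if x k then a k else 0) - μ)) := by
  classical
  set T := Finset.univ.filter (fun x : Fin n → Bool => (ones x).card = s) with hT
  set X : (Fin n → Bool) → ℝ := fun x => ∑ k, if x k then a k else 0 with hX
  set E : ℝ := (n:ℝ) * ∑ i, (a i)^2 - (∑ i, a i)^2 with hE
  -- step 1 : rewrite LHS as triple sum S1
  have step1 : (n:ℝ) * ∑ x ∈ T, (X x - μ) * Real.exp (l * (X x - μ))
      = ∑ x ∈ T, ∑ i ∈ ones x, ∑ j ∈ zeros x,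
          (a i - a j) * Real.exp (l * (X x - μ)) := by
    rw [Finset.mul_sum]
    refine Finset.sum_congr rfl fun x hx => ?_
    have hx' := (Finset.mem_filter.1 hx).2
    have hd := inner_double a hx'
    have : (n:ℝ) * (X x - μ) = ∑ i ∈ ones x, ∑ j ∈ zeros x, (a i - a j) := by
      rw [hd]; rw [hX]; simp only []; linarith [hμ]
    rw [← mul_assoc, this, Finset.sum_mul]
    exact Finset.sum_congr rfl fun i _ => by rw [Finset.sum_mul]
  -- reindexed copy
  have reidx := sum_swap_reindex s
    (fun x i j => (a i - a j) * Real.exp (l * (X x - μ)))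
  -- squared reindex
  have reidx2 := sum_swap_reindex s
    (fun x i j => (a i - a j)^2 * Real.exp (l * (X x - μ)))
  -- termwise bound
  have term : ∀ x ∈ T, ∀ i ∈ ones x, ∀ j ∈ zeros x,
      (a i - a j) * Real.exp (l * (X x - μ))
        + (a j - a i) * Real.exp (l * (X (swp x i j) - μ))
      ≤ l * (a i - a j)^2 *
          (Real.exp (l * (X x - μ)) + Real.exp (l * (X (swp x i j) - μ))) / 2 := by
    intro x hx i hi j hj
    rw [mem_ones] at hi; rw [mem_zeros] at hj
    have hXs : X (swp x i j) = X x - a i + a j := X_swp a hi hj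
    set u := l * (X x - μ) with hu
    set v := l * (X (swp x i j) - μ) with hv
    have huv : u - v = l * (a i - a j) := by rw [hu, hv, hXs]; ring
    have habs := abs_exp_sub_exp u v
    have h1 : (a i - a j) * Real.exp u + (a j - a i) * Real.exp v
        = (a i - a j) * (Real.exp u - Real.exp v) := by ring
    rw [h1]
    have h2 : (a i - a j) * (Real.exp u - Real.exp v)
        ≤ |a i - a j| * |Real.exp u - Real.exp v| := by
      rw [← abs_mul]; exact le_abs_self _
    refine h2.trans ?_
    have h3 : |a i - a j| * |Real.exp u - Real.exp v|
        ≤ |a i - a j| * (|u - v| * (Real.exp u + Real.exp v) / 2) :=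
      mul_le_mul_of_nonneg_left habs (abs_nonneg _)
    refine h3.trans (le_of_eq ?_)
    rw [huv, abs_mul, abs_of_nonneg hl, ← sq_abs (a i - a j)]
    ring
  -- notation for the three triple sums
  set S1 := ∑ x ∈ T, ∑ i ∈ ones x, ∑ j ∈ zeros x,
    (a i - a j) * Real.exp (l * (X x - μ)) with hS1
  set P := ∑ x ∈ T, ∑ i ∈ ones x, ∑ j ∈ zeros x,
    (a i - a j)^2 * Real.exp (l * (X x - μ)) with hP
  set Q := ∑ x ∈ T, ∑ i ∈ ones x, ∑ j ∈ zeros x,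
    (a i - a j)^2 * Real.exp (l * (X (swp x i j) - μ)) with hQ
  set m := ∑ x ∈ T, Real.exp (l * (X x - μ)) with hm
  have hQP : P = Q := by
    rw [reidx2, hQ]
    refine Finset.sum_congr rfl fun x _ => Finset.sum_congr rfl fun i _ =>
      Finset.sum_congr rfl fun j _ => ?_
    rw [show (a j - a i)^2 = (a i - a j)^2 by ring]
  -- S1 + S2 bounded by the quadratic sums
  have hsum : S1 + S1 ≤ l * P / 2 + l * Q / 2 := by
    nth_rewrite 2 [reidx]
    have h4 : ∀ x ∈ T, ∑ i ∈ ones x, ∑ j ∈ zeros x,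
        (a i - a j) * Real.exp (l * (X x - μ))
        + ∑ i ∈ ones x, ∑ j ∈ zeros x,
        (a j - a i) * Real.exp (l * (X (swp x i j) - μ))
        ≤ ∑ i ∈ ones x, ∑ j ∈ zeros x, (l * (a i - a j)^2 *
          (Real.exp (l * (X x - μ)) + Real.exp (l * (X (swp x i j) - μ))) / 2) := by
      intro x hx
      rw [← Finset.sum_add_distrib]
      refine Finset.sum_le_sum fun i hi => ?_
      rw [← Finset.sum_add_distrib]
      exact Finset.sum_le_sum fun j hj => term x hx i hi j hj
    calc S1 + ∑ x ∈ T, ∑ i ∈ ones x, ∑ j ∈ zeros x,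
          (a j - a i) * Real.exp (l * (X (swp x i j) - μ))
        = ∑ x ∈ T, (∑ i ∈ ones x, ∑ j ∈ zeros x,
            (a i - a j) * Real.exp (l * (X x - μ))
          + ∑ i ∈ ones x, ∑ j ∈ zeros x,
            (a j - a i) * Real.exp (l * (X (swp x i j) - μ))) := by
          rw [Finset.sum_add_distrib]
      _ ≤ ∑ x ∈ T, ∑ i ∈ ones x, ∑ j ∈ zeros x, (l * (a i - a j)^2 *
            (Real.exp (l * (X x - μ)) + Real.exp (l * (X (swp x i j) - μ))) / 2) :=
          Finset.sum_le_sum h4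
      _ = l * P / 2 + l * Q / 2 := by
          rw [hP, hQ, Finset.mul_sum, Finset.mul_sum, Finset.sum_div, Finset.sum_div,
            ← Finset.sum_add_distrib]
          refine Finset.sum_congr rfl fun x _ => ?_
          rw [Finset.mul_sum, Finset.mul_sum, Finset.sum_div, Finset.sum_div,
            ← Finset.sum_add_distrib]
          refine Finset.sum_congr rfl fun i _ => ?_
          rw [Finset.mul_sum, Finset.mul_sum, Finset.sum_div, Finset.sum_div,
            ← Finset.sum_add_distrib]
          refine Finset.sum_congr rfl fun j _ => ?_
          ring
  have hPm : P ≤ 2 * E * m := by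
    rw [hP, hm, Finset.mul_sum]
    refine Finset.sum_le_sum fun x _ => ?_
    have h5 : ∑ i ∈ ones x, ∑ j ∈ zeros x,
        (a i - a j)^2 * Real.exp (l * (X x - μ))
        = (∑ i ∈ ones x, ∑ j ∈ zeros x, (a i - a j)^2) * Real.exp (l * (X x - μ)) := by
      rw [Finset.sum_mul]
      exact Finset.sum_congr rfl fun i _ => by rw [Finset.sum_mul]
    rw [h5]
    have h6 := inner_double_sq a (x := x)
    have := mul_le_mul_of_nonneg_right h6 (Real.exp_pos (l * (X x - μ))).le
    calc (∑ i ∈ ones x, ∑ j ∈ zeros x, (a i - a j)^2) * Real.exp (l * (X x - μ))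
        ≤ 2 * ((n:ℝ) * ∑ i, (a i)^2 - (∑ i, a i)^2) * Real.exp (l * (X x - μ)) := this
      _ = 2 * E * Real.exp (l * (X x - μ)) := by rw [hE]
  have hlP : l * P ≤ l * (2 * E * m) := mul_le_mul_of_nonneg_left hPm hl
  rw [step1]
  have : S1 + S1 ≤ l * P := by rw [hQP] at hsum ⊢; linarith
  linarith

end Key

section Calc
open Finset SliceAux

/-- The MGF bound at λ = 1 via the differential inequality. -/
lemma mgf_bound {n s : ℕ} (hs : s ≤ n) (hn : 0 < n) (a : Fin n → ℝ) (μ : ℝ)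
    (hμ : (n:ℝ) * μ = s * ∑ i, a i) :
    ∑ x ∈ Finset.univ.filter (fun x : Fin n → Bool => (ones x).card = s),
        Real.exp ((∑ k, if x k then a k else 0) - μ)
      ≤ (Finset.univ.filter (fun x : Fin n → Bool => (ones x).card = s)).card *
        Real.exp ((∑ i, (a i)^2 - (∑ i, a i)^2 / n) / 2) := by
  classical
  have hkeyL : ∀ l : ℝ, 0 ≤ l →
      (n:ℝ) * ∑ x ∈ Finset.univ.filter (fun x : Fin n → Bool => (ones x).card = s),
        ((∑ k, if x k then a k else 0) - μ) *
          Real.exp (l * ((∑ k, if x k then a k else 0) - μ))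
      ≤ l * ((n:ℝ) * ∑ i, (a i)^2 - (∑ i, a i)^2) *
        ∑ x ∈ Finset.univ.filter (fun x : Fin n → Bool => (ones x).card = s),
          Real.exp (l * ((∑ k, if x k then a k else 0) - μ)) :=
    fun l hl => key_ineq hs a μ l hμ hl
  set T := Finset.univ.filter (fun x : Fin n → Bool => (ones x).card = s) with hT
  set X : (Fin n → Bool) → ℝ := fun x => ∑ k, if x k then a k else 0 with hX
  set η2 : ℝ := ∑ i, (a i)^2 - (∑ i, a i)^2 / n with hη2
  have hnR : (0:ℝ) < n := by exact_mod_cast hn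
  have hEη : (n:ℝ) * ∑ i, (a i)^2 - (∑ i, a i)^2 = (n:ℝ) * η2 := by
    rw [hη2]; field_simp
  set g : ℝ → ℝ := fun l => ∑ x ∈ T, Real.exp (l * (X x - μ) - l^2 * (η2/2)) with hg
  have hder : ∀ l : ℝ, HasDerivAt g
      (∑ x ∈ T, ((X x - μ) - (2:ℕ) * l^1 * (η2/2)) *
        Real.exp (l * (X x - μ) - l^2 * (η2/2))) l := by
    intro l
    apply HasDerivAt.fun_sum
    intro x _
    have h1 : HasDerivAt (fun l : ℝ => l * (X x - μ) - l^2 * (η2/2))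
        ((X x - μ) - (2:ℕ) * l^1 * (η2/2)) l :=
      (hasDerivAt_mul_const (X x - μ)).sub ((hasDerivAt_pow 2 l).mul_const (η2/2))
    have := h1.exp
    exact this.congr_deriv (by ring)
  have hdiff : Differentiable ℝ g := fun l => (hder l).differentiableAt
  have hderiv_nonpos : ∀ l ∈ Set.Ioo (0:ℝ) 1, deriv g l ≤ 0 := by
    intro l hl
    rw [(hder l).deriv]
    have hkey := hkeyL l hl.1.le
    set c : ℝ := Real.exp (-(l^2 * (η2/2))) with hc
    have hsplit : ∀ x : Fin n → Bool,
        Real.exp (l * (X x - μ) - l^2 * (η2/2)) = Real.exp (l * (X x - μ)) * c := by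
      intro x; rw [hc, ← Real.exp_add]; ring_nf
    have hterm : ∀ x : Fin n → Bool,
        ((X x - μ) - (2:ℕ) * l^1 * (η2/2)) * Real.exp (l * (X x - μ) - l^2 * (η2/2))
        = (X x - μ) * Real.exp (l * (X x - μ)) * c
          - l * η2 * Real.exp (l * (X x - μ)) * c := by
      intro x; rw [hsplit x]; push_cast; ring
    rw [Finset.sum_congr rfl (fun x _ => hterm x), Finset.sum_sub_distrib,
      ← Finset.sum_mul, ← Finset.sum_mul]
    have hc0 : 0 < c := Real.exp_pos _
    have h7 : ∑ x ∈ T, (X x - μ) * Real.exp (l * (X x - μ))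
        ≤ ∑ x ∈ T, l * η2 * Real.exp (l * (X x - μ)) := by
      have h8 : l * ((n:ℝ) * ∑ i, (a i)^2 - (∑ i, a i)^2) *
          ∑ x ∈ T, Real.exp (l * (X x - μ))
          = (n:ℝ) * ∑ x ∈ T, l * η2 * Real.exp (l * (X x - μ)) := by
        rw [hEη, ← Finset.mul_sum]; ring
      rw [h8] at hkey
      exact le_of_mul_le_mul_left hkey hnR
    have h9 := mul_le_mul_of_nonneg_right (sub_nonpos.2 h7) hc0.le
    rw [sub_mul, zero_mul] at h9
    linarith
  have hanti : AntitoneOn g (Set.Icc (0:ℝ) 1) := by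
    apply antitoneOn_of_deriv_nonpos (convex_Icc 0 1) hdiff.continuous.continuousOn
      hdiff.differentiableOn
    rw [interior_Icc]; exact hderiv_nonpos
  have h10 : g 1 ≤ g 0 :=
    hanti (Set.mem_Icc.2 ⟨le_refl 0, zero_le_one⟩) (Set.mem_Icc.2 ⟨zero_le_one, le_refl 1⟩)
      zero_le_one
  have hg0 : g 0 = T.card := by
    rw [hg]; simp
  have hg1 : g 1 = (∑ x ∈ T, Real.exp (X x - μ)) * Real.exp (-(η2/2)) := by
    rw [hg, Finset.sum_mul]
    refine Finset.sum_congr rfl fun x _ => ?_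
    rw [← Real.exp_add]; ring_nf
  rw [hg1, hg0] at h10
  have hepos : (0:ℝ) < Real.exp (η2/2) := Real.exp_pos _
  have h11 := mul_le_mul_of_nonneg_right h10 hepos.le
  rw [mul_assoc, ← Real.exp_add, neg_add_cancel, Real.exp_zero, mul_one] at h11
  exact h11

lemma card_filter_lt (n s : ℕ) (hs : s ≤ n) :
    (Finset.univ.filter (fun i : Fin n => (i:ℕ) < s)).card = s := by
  classical
  have h : (Finset.univ.filter (fun i : Fin n => (i:ℕ) < s)).card = (Finset.range s).card := by
    apply Finset.card_bij (fun (a : Fin n) _ => (a : ℕ))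
    · intro x hx; exact Finset.mem_range.2 (Finset.mem_filter.1 hx).2
    · intro x _ y _ h; exact Fin.val_injective h
    · intro b hb
      refine ⟨⟨b, lt_of_lt_of_le (Finset.mem_range.1 hb) hs⟩, ?_, rfl⟩
      simp [Finset.mem_range.1 hb]
  rw [h, Finset.card_range]

end Calc

open scoped Classical

/-- If X = Σ a_i ξ_i with ξ uniform on the 0/1 vectors with exactly s ones and
η² = Σ a_i² − (Σ a_i)²/n, then E exp(X − E X) ≤ 2 exp(C η²) for an absolute constant C. -/
theorem slice_exp_moment :
    ∃ C : ℝ, 0 < C ∧ ∀ (n s : ℕ), s ≤ n → ∀ a : Fin n → ℝ,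
    let T : Finset (Fin n → Bool) :=
      Finset.univ.filter fun x => (Finset.univ.filter fun i => x i = true).card = s
    let X : (Fin n → Bool) → ℝ := fun x => ∑ i, if x i then a i else 0
    let EX : ℝ := (∑ x ∈ T, X x) / T.card
    let η2 : ℝ := ∑ i, (a i) ^ 2 - (∑ i, a i) ^ 2 / n
    (∑ x ∈ T, Real.exp (X x - EX)) / T.card ≤ 2 * Real.exp (C * η2) := by
  classical
  refine ⟨1/2, by norm_num, ?_⟩
  intro n s hsn a
  intro T X EX η2
  by_cases hn : n = 0
  · -- degenerate case n = 0
    subst hn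
    have hs0 : s = 0 := Nat.le_zero.mp hsn
    subst hs0
    have hT : T = Finset.univ := by
      show Finset.univ.filter
        (fun x : Fin 0 → Bool => (Finset.univ.filter fun i => x i = true).card = 0)
        = Finset.univ
      apply Finset.filter_true_of_mem
      intro x _
      simp
    have hX : ∀ x, X x = 0 := fun x => by
      show (∑ i, if x i then a i else 0) = 0; simp
    have hEX : EX = 0 := by
      show (∑ x ∈ T, X x) / T.card = 0
      simp [hX]
    have hη : η2 = 0 := by
      show (∑ i : Fin 0, (a i)^2 - (∑ i : Fin 0, a i)^2 / ((0:ℕ):ℝ)) = 0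
      simp
    rw [hEX, hη]
    have h1 : ∀ x ∈ T, Real.exp (X x - 0) = 1 := fun x _ => by rw [hX]; simp
    rw [Finset.sum_congr rfl h1, Finset.sum_const, hT]
    simp
  · -- main case
    have hn0 : 0 < n := Nat.pos_of_ne_zero hn
    have hnR : (0:ℝ) < n := by exact_mod_cast hn0
    set A : ℝ := ∑ i, a i with hA
    set μ : ℝ := s * A / n with hμdef
    have hμ : (n:ℝ) * μ = s * A := by
      rw [hμdef]; field_simp
    -- T is nonempty
    have hmem : (fun i : Fin n => decide ((i:ℕ) < s)) ∈ T := by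
      have h2 : (Finset.univ.filter fun i : Fin n =>
          (fun i : Fin n => decide ((i:ℕ) < s)) i = true).card = s := by
        have h3 : (Finset.univ.filter fun i : Fin n =>
            (fun i : Fin n => decide ((i:ℕ) < s)) i = true)
            = Finset.univ.filter (fun i : Fin n => (i:ℕ) < s) := by
          apply Finset.filter_congr
          intro i _
          simp
        rw [h3, card_filter_lt n s hsn]
      exact Finset.mem_filter.2 ⟨Finset.mem_univ _, h2⟩
    have hcard : 0 < T.card := Finset.card_pos.2 ⟨_, hmem⟩
    have hcardR : (0:ℝ) < T.card := by exact_mod_cast hcard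
    -- EX = μ
    have h0 : ∑ x ∈ T,
        ((n:ℝ) * (∑ k, if x k then a k else 0) - s * A) = 0 := sum_X_slice hsn a
    rw [Finset.sum_sub_distrib, Finset.sum_const, ← Finset.mul_sum, nsmul_eq_mul] at h0
    have hsumX : ∑ x ∈ T, X x = T.card * μ := by
      have h4 : (n:ℝ) * ∑ x ∈ T, X x = (n:ℝ) * (T.card * μ) := by
        have h5 : ∑ x ∈ T, X x = ∑ x ∈ T, (∑ k, if x k then a k else 0) := rfl
        rw [h5]
        have := h0
        nlinarith [hμ, this]
      exact mul_left_cancel₀ (ne_of_gt hnR) h4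
    have hEX : EX = μ := by
      show (∑ x ∈ T, X x) / T.card = μ
      rw [hsumX]
      field_simp
    -- apply the MGF bound
    have hb : ∑ x ∈ T, Real.exp (X x - μ) ≤ T.card * Real.exp (η2 / 2) :=
      mgf_bound hsn hn0 a μ hμ
    rw [hEX]
    rw [div_le_iff₀ hcardR]
    calc ∑ x ∈ T, Real.exp (X x - μ) ≤ T.card * Real.exp (η2 / 2) := hb
      _ ≤ 2 * Real.exp (1/2 * η2) * T.card := by
          rw [show (1:ℝ)/2 * η2 = η2 / 2 by ring]
          nlinarith [Real.exp_pos (η2/2), hcardR]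
end

section
/- The three-dimensional Gaussian integral identity: for all x', y' ∈ ℝ, (1/(π²√(π−1))) ∫_{ℝ³} exp( −(1/(2π))(x'−β₀+β₂)² − (1/(2π))(y'−β₁+β₂)² − (1/(4π(π−1)))(x'−y'+β₁−β₀)² − (β₀²+β₁²+2β₂²)/2 ) dβ₀ dβ₁ dβ₂ = (2/√(π(2+π))) · exp( −((1+π)x'² − 2x'y' + (1+π)y'²)/(2π(2+π)) ). -/
set_option maxHeartbeats 1600000


open MeasureTheory Real

/-- One-dimensional Gaussian integral with a linear and a constant term. -/
lemma gauss_lin (a b c : ℝ) (ha : 0 < a) :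
    (∫ t : ℝ, Real.exp (-a * t ^ 2 + b * t + c))
      = Real.sqrt (π / a) * Real.exp (b ^ 2 / (4 * a) + c) := by
  have ha' : a ≠ 0 := ne_of_gt ha
  have h : ∀ t : ℝ, -a * t ^ 2 + b * t + c
      = -a * (t - b / (2 * a)) ^ 2 + (b ^ 2 / (4 * a) + c) := by
    intro t; field_simp; ring
  simp_rw [h, Real.exp_add, integral_mul_const]
  rw [integral_sub_right_eq_self (fun t : ℝ => Real.exp (-a * t ^ 2)) (b / (2 * a)),
    integral_gaussian]

/-- The three-dimensional Gaussian integral identity used in the day-one analysis. -/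
theorem gaussian_triple_integral (x' y' : ℝ) :
    (1 / (π ^ 2 * Real.sqrt (π - 1))) *
      ∫ b : ℝ × ℝ × ℝ,
        Real.exp (-(x' - b.1 + b.2.2) ^ 2 / (2 * π) - (y' - b.2.1 + b.2.2) ^ 2 / (2 * π)
          - (x' - y' + b.2.1 - b.1) ^ 2 / (4 * π * (π - 1))
          - (b.1 ^ 2 + b.2.1 ^ 2 + 2 * b.2.2 ^ 2) / 2)
    = (2 / Real.sqrt (π * (2 + π))) *
        Real.exp (-((1 + π) * x' ^ 2 - 2 * x' * y' + (1 + π) * y' ^ 2) / (2 * π * (2 + π))) := by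
  have hp3 : (3.141592 : ℝ) < π := Real.pi_gt_d6
  have hp1 : (1 : ℝ) < π := by linarith
  have hp0 : (0 : ℝ) < π := by linarith
  have hpm1 : (0 : ℝ) < π - 1 := by linarith
  have hp2 : (0 : ℝ) < 2 + π := by linarith
  have hsq1 : (0 : ℝ) < π ^ 2 - 1 := by nlinarith
  have hpp : (0 : ℝ) < π ^ 2 + π - 1 := by nlinarith
  have hπ : π ≠ 0 := ne_of_gt hp0
  have hπm1 : π - 1 ≠ 0 := ne_of_gt hpm1
  have hπ21 : π ^ 2 - 1 ≠ 0 := ne_of_gt hsq1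
  have hπpp : π ^ 2 + π - 1 ≠ 0 := ne_of_gt hpp
  have hπ2 : (2 : ℝ) + π ≠ 0 := ne_of_gt hp2
  have hπpp' : -1 + π + π ^ 2 ≠ 0 := by nlinarith
  -- the coefficients of the successive one-dimensional Gaussian integrals
  set a2 : ℝ := (1 + π) / π with ha2def
  set a1 : ℝ := (π ^ 2 + π - 1) / (2 * (π ^ 2 - 1)) with ha1def
  set a0 : ℝ := (π * (2 + π)) / (2 * (π ^ 2 + π - 1)) with ha0def
  have ha2 : 0 < a2 := by apply div_pos <;> linarith
  have ha1 : 0 < a1 := by apply div_pos <;> nlinarith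
  have ha0 : 0 < a0 := by apply div_pos <;> nlinarith
  -- the integrand
  set F : ℝ × ℝ × ℝ → ℝ := fun b =>
    Real.exp (-(x' - b.1 + b.2.2) ^ 2 / (2 * π) - (y' - b.2.1 + b.2.2) ^ 2 / (2 * π)
      - (x' - y' + b.2.1 - b.1) ^ 2 / (4 * π * (π - 1))
      - (b.1 ^ 2 + b.2.1 ^ 2 + 2 * b.2.2 ^ 2) / 2) with hFdef
  -- integrable dominating functions
  have h1 : Integrable (fun t : ℝ => Real.exp (-(1/2 : ℝ) * t ^ 2)) :=
    integrable_exp_neg_mul_sq (by norm_num)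
  have h3 : Integrable (fun t : ℝ => Real.exp (-(1 : ℝ) * t ^ 2)) :=
    integrable_exp_neg_mul_sq (by norm_num)
  have hG2 : Integrable
      (fun q : ℝ × ℝ => Real.exp (-(1/2 : ℝ) * q.1 ^ 2) * Real.exp (-(1 : ℝ) * q.2 ^ 2))
      (volume : Measure (ℝ × ℝ)) := by
    rw [Measure.volume_eq_prod]; exact h1.mul_prod h3
  have hG3 : Integrable
      (fun b : ℝ × ℝ × ℝ => Real.exp (-(1/2 : ℝ) * b.1 ^ 2) *
        (Real.exp (-(1/2 : ℝ) * b.2.1 ^ 2) * Real.exp (-(1 : ℝ) * b.2.2 ^ 2)))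
      (volume : Measure (ℝ × ℝ × ℝ)) := by
    rw [Measure.volume_eq_prod]
    exact h1.mul_prod (h1.mul_prod h3 : Integrable _ ((volume : Measure ℝ).prod volume))
  -- the key pointwise exponent bound
  have hbound : ∀ b : ℝ × ℝ × ℝ,
      ‖F b‖ ≤ Real.exp (-(1/2 : ℝ) * b.1 ^ 2) *
        (Real.exp (-(1/2 : ℝ) * b.2.1 ^ 2) * Real.exp (-(1 : ℝ) * b.2.2 ^ 2)) := by
    intro b
    rw [hFdef]
    simp only [Real.norm_eq_abs, Real.abs_exp, ← Real.exp_add]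
    apply Real.exp_le_exp.2
    simp only [neg_div]
    have k1 : 0 ≤ (x' - b.1 + b.2.2) ^ 2 / (2 * π) :=
      div_nonneg (sq_nonneg _) (by linarith)
    have k2 : 0 ≤ (y' - b.2.1 + b.2.2) ^ 2 / (2 * π) :=
      div_nonneg (sq_nonneg _) (by linarith)
    have k3 : 0 ≤ (x' - y' + b.2.1 - b.1) ^ 2 / (4 * π * (π - 1)) :=
      div_nonneg (sq_nonneg _) (by nlinarith [mul_pos hp0 hpm1])
    linarith [k1, k2, k3]
  have hFcont : Continuous F := by
    rw [hFdef]; fun_prop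
  have hFint : Integrable F (volume : Measure (ℝ × ℝ × ℝ)) :=
    hG3.mono' hFcont.aestronglyMeasurable (Filter.Eventually.of_forall hbound)
  -- linear coefficients and constants
  set B0 : ℝ := ((1 + π) * x' - y') / (π ^ 2 + π - 1) with hB0def
  set C0 : ℝ := (2 * x' * y' - x' ^ 2 - π * y' ^ 2 - π * x' ^ 2) / (2 * (π ^ 2 + π - 1))
    with hC0def
  -- inner double integral, for each fixed b0
  have inner_eq : ∀ b0 : ℝ,
      (∫ q : ℝ × ℝ, F (b0, q))
        = Real.sqrt (π / a2) * (Real.sqrt (π / a1) *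
            Real.exp (-a0 * b0 ^ 2 + B0 * b0 + C0)) := by
    intro b0
    have hslb : ∀ q : ℝ × ℝ, ‖F (b0, q)‖ ≤
        Real.exp (-(1/2 : ℝ) * q.1 ^ 2) * Real.exp (-(1 : ℝ) * q.2 ^ 2) := by
      intro q
      refine le_trans (hbound (b0, q)) ?_
      have h01 : Real.exp (-(1/2 : ℝ) * b0 ^ 2) ≤ 1 := by
        apply Real.exp_le_one_iff.2; nlinarith [sq_nonneg b0]
      exact mul_le_of_le_one_left (by positivity) h01
    have hsl : Integrable (fun q : ℝ × ℝ => F (b0, q)) (volume : Measure (ℝ × ℝ)) :=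
      hG2.mono' (hFcont.comp (by fun_prop)).aestronglyMeasurable
        (Filter.Eventually.of_forall hslb)
    rw [Measure.volume_eq_prod] at hsl ⊢
    rw [integral_prod _ hsl]
    -- innermost integral over b2
    have step2 : ∀ b1 : ℝ,
        (∫ b2 : ℝ, F (b0, b1, b2))
          = Real.sqrt (π / a2) *
              Real.exp ((((b0 + b1 - x' - y') / π)) ^ 2 / (4 * a2)
                + (-(x' - b0) ^ 2 / (2 * π) - (y' - b1) ^ 2 / (2 * π)
                  - (x' - y' + b1 - b0) ^ 2 / (4 * π * (π - 1))
                  - (b0 ^ 2 + b1 ^ 2) / 2)) := by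
      intro b1
      have harg : ∀ b2 : ℝ,
          (-(x' - b0 + b2) ^ 2 / (2 * π) - (y' - b1 + b2) ^ 2 / (2 * π)
            - (x' - y' + b1 - b0) ^ 2 / (4 * π * (π - 1))
            - (b0 ^ 2 + b1 ^ 2 + 2 * b2 ^ 2) / 2)
          = -a2 * b2 ^ 2 + ((b0 + b1 - x' - y') / π) * b2
            + (-(x' - b0) ^ 2 / (2 * π) - (y' - b1) ^ 2 / (2 * π)
              - (x' - y' + b1 - b0) ^ 2 / (4 * π * (π - 1))
              - (b0 ^ 2 + b1 ^ 2) / 2) := by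
        intro b2
        rw [ha2def]
        field_simp
        ring
      simp only [hFdef]
      simp_rw [harg]
      rw [gauss_lin _ _ _ ha2]
    simp_rw [step2, integral_const_mul]
    -- middle integral over b1
    have harg1 : ∀ b1 : ℝ,
        ((((b0 + b1 - x' - y') / π)) ^ 2 / (4 * a2)
          + (-(x' - b0) ^ 2 / (2 * π) - (y' - b1) ^ 2 / (2 * π)
            - (x' - y' + b1 - b0) ^ 2 / (4 * π * (π - 1))
            - (b0 ^ 2 + b1 ^ 2) / 2))
        = -a1 * b1 ^ 2 + ((b0 - x' + π * y') / (π ^ 2 - 1)) * b1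
          + ((b0 ^ 2 - 2 * y' * b0 + 2 * x' * y' - π * b0 ^ 2 - π * y' ^ 2
              + 2 * π * x' * b0 - π * x' ^ 2 - π ^ 2 * b0 ^ 2) / (2 * (π ^ 2 - 1))) := by
      intro b1
      rw [ha2def, ha1def]
      field_simp
      ring
    simp_rw [harg1]
    rw [gauss_lin _ _ _ ha1]
    congr 3
    rw [ha1def, ha0def, hB0def, hC0def]
    field_simp
    ring_nf
    field_simp
    ring
  -- outer integral over b0
  rw [Measure.volume_eq_prod]
  rw [integral_prod F (by rw [← Measure.volume_eq_prod]; exact hFint)]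
  simp_rw [inner_eq, integral_const_mul]
  rw [gauss_lin _ _ _ ha0]
  -- final exponent identity
  have hexp : B0 ^ 2 / (4 * a0) + C0
      = -((1 + π) * x' ^ 2 - 2 * x' * y' + (1 + π) * y' ^ 2) / (2 * π * (2 + π)) := by
    rw [hB0def, hC0def, ha0def]
    field_simp
    ring_nf
    field_simp
    ring
  rw [hexp]
  -- final constant identity
  have hconst : (1 / (π ^ 2 * Real.sqrt (π - 1))) *
      (Real.sqrt (π / a2) * (Real.sqrt (π / a1) * Real.sqrt (π / a0)))
      = 2 / Real.sqrt (π * (2 + π)) := by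
    have hK : 0 ≤ (1 / (π ^ 2 * Real.sqrt (π - 1))) *
        (Real.sqrt (π / a2) * (Real.sqrt (π / a1) * Real.sqrt (π / a0))) := by positivity
    have hsqm1 : (0:ℝ) < Real.sqrt (π - 1) := Real.sqrt_pos.2 hpm1
    have hsq2 : (0:ℝ) < Real.sqrt (π * (2 + π)) := Real.sqrt_pos.2 (by positivity)
    have hsq : ((1 / (π ^ 2 * Real.sqrt (π - 1))) *
        (Real.sqrt (π / a2) * (Real.sqrt (π / a1) * Real.sqrt (π / a0)))) ^ 2
        = (2 / Real.sqrt (π * (2 + π))) ^ 2 := by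
      rw [mul_pow, mul_pow, mul_pow, div_pow, div_pow, mul_pow,
        Real.sq_sqrt (by positivity : (0:ℝ) ≤ π / a2),
        Real.sq_sqrt (by positivity : (0:ℝ) ≤ π / a1),
        Real.sq_sqrt (by positivity : (0:ℝ) ≤ π / a0),
        Real.sq_sqrt (le_of_lt hpm1),
        Real.sq_sqrt (by positivity : (0:ℝ) ≤ π * (2 + π))]
      rw [ha2def, ha1def, ha0def]
      field_simp
      ring_nf
      field_simp
      ring
    calc (1 / (π ^ 2 * Real.sqrt (π - 1))) *
          (Real.sqrt (π / a2) * (Real.sqrt (π / a1) * Real.sqrt (π / a0)))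
        = Real.sqrt (((1 / (π ^ 2 * Real.sqrt (π - 1))) *
            (Real.sqrt (π / a2) * (Real.sqrt (π / a1) * Real.sqrt (π / a0)))) ^ 2) :=
          (Real.sqrt_sq hK).symm
      _ = Real.sqrt ((2 / Real.sqrt (π * (2 + π))) ^ 2) := by rw [hsq]
      _ = 2 / Real.sqrt (π * (2 + π)) := Real.sqrt_sq (by positivity)
  linear_combination
    Real.exp (-((1 + π) * x' ^ 2 - 2 * x' * y' + (1 + π) * y' ^ 2) / (2 * π * (2 + π))) * hconst
end
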